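/- Let H be a graph on vertex set {1,…,m}, Γ a weighted graph with finite nonempty vertex subsets X₁,…,X_m, and ab an edge of H. Suppose (X_a, X_b)_Γ is (p, γ√(|X_a||X_b|))-jumbled. Let H_{−ab} be H with the edge ab removed and H_{−a,−b} be H with all edges incident to a or b removed. Then for any symmetric function f : V(Γ) × V(Γ) → [0,1], |E_{x∈X_a, y∈X_b}[(Γ(x,y) − p) · f(H_{−ab} | a→x, b→y)]| ≤ γ √(f(H_{−ab}) · f(H_{−a,−b})), where f(H' | partial assignment) denotes the average over uniform compatible extensions of the product of f over the edges of H', and f(H') the full average. -/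

import Mathlib

open Finset in
open Classical in
lemma piFinset_eq_biUnion {ι V : Type*} [Fintype ι] [DecidableEq ι] [DecidableEq V]
    (X : ι → Finset V) (c : ι) :
    Fintype.piFinset X
      = (X c).biUnion (fun t => Fintype.piFinset (Function.update X c {t})) := by
  ext z
  simp only [Fintype.mem_piFinset, Finset.mem_biUnion, Function.update_apply]
  constructor
  · intro h
    refine ⟨z c, h c, fun i => ?_⟩
    by_cases hi : i = c
    · subst hi; simp
    · simp [hi, h i]
  · rintro ⟨t, ht, hz⟩ i
    by_cases hi : i = c
    · subst hi
      have := hz i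
      simp at this
      rw [this]; exact ht
    · simpa [hi] using hz i

open Classical in
lemma sum_piFinset_split {ι V : Type*} [Fintype ι] [DecidableEq ι] [DecidableEq V]
    (X : ι → Finset V) (c : ι) (F : (ι → V) → ℝ) :
    ∑ z ∈ Fintype.piFinset X, F z
      = ∑ t ∈ X c, ∑ z ∈ Fintype.piFinset (Function.update X c {t}), F z := by
  rw [piFinset_eq_biUnion X c]
  refine Finset.sum_biUnion ?_
  intro t ht t' ht' htt'
  simp only [Function.onFun]
  rw [Finset.disjoint_left]
  intro z hz hz'
  apply htt'
  have h1 := (Fintype.mem_piFinset.1 hz) c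
  have h2 := (Fintype.mem_piFinset.1 hz') c
  simp only [Function.update_self, Finset.mem_singleton] at h1 h2
  rw [← h1, ← h2]

open Classical in
lemma sum_piFinset_update_congr {ι V : Type*} [Fintype ι] [DecidableEq ι] [DecidableEq V]
    (X : ι → Finset V) (c : ι) (t t' : V) (F : (ι → V) → ℝ)
    (hF : ∀ z s, F (Function.update z c s) = F z) :
    ∑ z ∈ Fintype.piFinset (Function.update X c {t}), F z
      = ∑ z ∈ Fintype.piFinset (Function.update X c {t'}), F z := by
  refine Finset.sum_nbij' (fun z => Function.update z c t') (fun z => Function.update z c t)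
    ?_ ?_ ?_ ?_ ?_
  · intro z hz
    rw [Fintype.mem_piFinset] at hz ⊢
    intro i
    by_cases hi : i = c
    · subst hi; simp
    · simpa [Function.update_of_ne hi] using hz i
  · intro z hz
    rw [Fintype.mem_piFinset] at hz ⊢
    intro i
    by_cases hi : i = c
    · subst hi; simp
    · simpa [Function.update_of_ne hi] using hz i
  · intro z hz
    have h1 := (Fintype.mem_piFinset.1 hz) c
    simp only [Function.update_self, Finset.mem_singleton] at h1
    try simp only []
    rw [Function.update_idem, ← h1, Function.update_eq_self]
  · intro z hz
    have h1 := (Fintype.mem_piFinset.1 hz) c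
    simp only [Function.update_self, Finset.mem_singleton] at h1
    try simp only []
    rw [Function.update_idem, ← h1, Function.update_eq_self]
  · intro z hz
    rw [hF]

open Classical in
lemma sum_piFinset_indep {ι V : Type*} [Fintype ι] [DecidableEq ι] [DecidableEq V]
    (X : ι → Finset V) (c : ι) (t : V) (F : (ι → V) → ℝ)
    (hF : ∀ z s, F (Function.update z c s) = F z) :
    ∑ z ∈ Fintype.piFinset X, F z
      = ((X c).card : ℝ) * ∑ z ∈ Fintype.piFinset (Function.update X c {t}), F z := by
  rw [sum_piFinset_split X c F]
  rw [Finset.sum_congr rfl (fun t' _ => sum_piFinset_update_congr X c t' t F hF)]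
  rw [Finset.sum_const, nsmul_eq_mul]

open Classical in
noncomputable def starP {V : Type*} {m : ℕ} (f : V → V → ℝ) (G : SimpleGraph (Fin m))
    (c : Fin m) (w : V) (z : Fin m → V) : ℝ :=
  ∏ j : Fin m, if G.Adj c j then f w (z j) else 1

open Classical in
noncomputable def edgeP {V : Type*} {m : ℕ} (f : V → V → ℝ) (G : SimpleGraph (Fin m))
    (z : Fin m → V) : ℝ :=
  ∏ i : Fin m, ∏ j : Fin m, if i < j ∧ G.Adj i j then f (z i) (z j) else 1

open Classical in
lemma starP_nonneg {V : Type*} {m : ℕ} (f : V → V → ℝ) (hf : ∀ x y, 0 ≤ f x y)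
    (G : SimpleGraph (Fin m)) (c : Fin m) (w : V) (z : Fin m → V) : 0 ≤ starP f G c w z :=
  Finset.prod_nonneg fun j _ => by split_ifs <;> first | exact hf _ _ | norm_num

open Classical in
lemma starP_le_one {V : Type*} {m : ℕ} (f : V → V → ℝ) (hf : ∀ x y, 0 ≤ f x y ∧ f x y ≤ 1)
    (G : SimpleGraph (Fin m)) (c : Fin m) (w : V) (z : Fin m → V) : starP f G c w z ≤ 1 :=
  Finset.prod_le_one (fun j _ => by split_ifs <;> first | exact (hf _ _).1 | norm_num)
    (fun j _ => by split_ifs <;> first | exact (hf _ _).2 | norm_num)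

open Classical in
lemma edgeP_nonneg {V : Type*} {m : ℕ} (f : V → V → ℝ) (hf : ∀ x y, 0 ≤ f x y)
    (G : SimpleGraph (Fin m)) (z : Fin m → V) : 0 ≤ edgeP f G z :=
  Finset.prod_nonneg fun i _ => Finset.prod_nonneg fun j _ => by
    split_ifs <;> first | exact hf _ _ | norm_num

open Classical in
lemma starP_update {V : Type*} {m : ℕ} (f : V → V → ℝ) (G : SimpleGraph (Fin m))
    (c c' : Fin m) (hcc' : ¬ G.Adj c c') (w : V) (z : Fin m → V) (s : V) :
    starP f G c w (Function.update z c' s) = starP f G c w z := by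
  refine Finset.prod_congr rfl fun j _ => ?_
  by_cases hj : j = c'
  · subst hj; rw [if_neg hcc', if_neg hcc']
  · rw [Function.update_of_ne hj]

open Classical in
lemma edgeP_update {V : Type*} {m : ℕ} (f : V → V → ℝ) (G : SimpleGraph (Fin m))
    (c' : Fin m) (hc' : ∀ j, ¬ G.Adj c' j) (z : Fin m → V) (s : V) :
    edgeP f G (Function.update z c' s) = edgeP f G z := by
  refine Finset.prod_congr rfl fun i _ => Finset.prod_congr rfl fun j _ => ?_
  by_cases hij : G.Adj i j
  · have hi : i ≠ c' := fun h => hc' j (h ▸ hij)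
    have hj : j ≠ c' := fun h => hc' i (G.adj_symm (h ▸ hij))
    rw [Function.update_of_ne hi, Function.update_of_ne hj]
  · rw [if_neg (fun h => hij h.2), if_neg (fun h => hij h.2)]

open Classical in
lemma prod_star {V : Type*} {m : ℕ} (f : V → V → ℝ) (hf : ∀ x y, f x y = f y x)
    (G : SimpleGraph (Fin m)) (c : Fin m) (z : Fin m → V) :
    (∏ i : Fin m, ∏ j : Fin m,
        if (i < j ∧ G.Adj i j) ∧ (i = c ∨ j = c) then f (z i) (z j) else 1)
      = starP f G c (z c) z := by
  have step1 : ∀ i j : Fin m,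
      (if (i < j ∧ G.Adj i j) ∧ (i = c ∨ j = c) then f (z i) (z j) else 1)
        = (if i = c then (if c < j ∧ G.Adj c j then f (z c) (z j) else 1) else 1)
          * (if j = c then (if i < c ∧ G.Adj i c then f (z i) (z c) else 1) else 1) := by
    intro i j
    by_cases hi : i = c <;> by_cases hj : j = c
    · subst hi; subst hj; simp [lt_irrefl]
    · subst hi; simp [hj]
    · subst hj; simp [hi]
    · simp [hi, hj]
  have e1 : (∏ i : Fin m, ∏ j : Fin m,
      (if i = c then (if c < j ∧ G.Adj c j then f (z c) (z j) else 1) else 1))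
      = ∏ j : Fin m, if c < j ∧ G.Adj c j then f (z c) (z j) else 1 := by
    have : ∀ i : Fin m, (∏ j : Fin m,
        (if i = c then (if c < j ∧ G.Adj c j then f (z c) (z j) else 1) else 1))
        = if i = c then (∏ j : Fin m, if c < j ∧ G.Adj c j then f (z c) (z j) else 1)
          else 1 := by
      intro i; split_ifs <;> simp
    rw [Finset.prod_congr rfl fun i _ => this i, Finset.prod_ite_eq' Finset.univ c]
    simp
  have e2 : (∏ i : Fin m, ∏ j : Fin m,
      (if j = c then (if i < c ∧ G.Adj i c then f (z i) (z c) else 1) else 1))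
      = ∏ i : Fin m, if i < c ∧ G.Adj i c then f (z i) (z c) else 1 := by
    refine Finset.prod_congr rfl fun i _ => ?_
    rw [Finset.prod_ite_eq' Finset.univ c]
    simp
  rw [Finset.prod_congr rfl fun i (_ : i ∈ Finset.univ) =>
    Finset.prod_congr rfl fun j (_ : j ∈ Finset.univ) => step1 i j]
  rw [Finset.prod_congr rfl fun i (_ : i ∈ Finset.univ) =>
    (Finset.prod_mul_distrib :
      (∏ j : Fin m, _ * _) = _)]
  rw [Finset.prod_mul_distrib, e1, e2, ← Finset.prod_mul_distrib]
  refine Finset.prod_congr rfl fun j _ => ?_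
  rcases lt_trichotomy c j with h | h | h
  · have h2 : ¬ (j < c ∧ G.Adj j c) := fun hh => absurd (hh.1.trans h) (lt_irrefl _)
    rw [if_neg h2, mul_one]
    by_cases hadj : G.Adj c j
    · rw [if_pos ⟨h, hadj⟩, if_pos hadj]
    · rw [if_neg (fun hh => hadj hh.2), if_neg hadj]
  · subst h
    simp [lt_irrefl, SimpleGraph.irrefl]
  · have h2 : ¬ (c < j ∧ G.Adj c j) := fun hh => absurd (hh.1.trans h) (lt_irrefl _)
    rw [if_neg h2, one_mul]
    by_cases hadj : G.Adj c j
    · rw [if_pos ⟨h, G.adj_symm hadj⟩, if_pos hadj, hf]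
    · rw [if_neg (fun hh => hadj (G.adj_symm hh.2)), if_neg hadj]

open Classical in
lemma edgeP_factor {V : Type*} {m : ℕ} (f : V → V → ℝ) (hf : ∀ x y, f x y = f y x)
    (G' G'' : SimpleGraph (Fin m)) (a b : Fin m) (hne : a ≠ b) (hab : ¬ G'.Adj a b)
    (hG'' : ∀ i j, G''.Adj i j ↔ G'.Adj i j ∧ i ≠ a ∧ i ≠ b ∧ j ≠ a ∧ j ≠ b)
    (z : Fin m → V) :
    edgeP f G' z = starP f G' a (z a) z * starP f G' b (z b) z * edgeP f G'' z := by
  rw [← prod_star f hf G' a z, ← prod_star f hf G' b z]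
  unfold edgeP
  rw [← Finset.prod_mul_distrib, ← Finset.prod_mul_distrib]
  refine Finset.prod_congr rfl fun i _ => ?_
  rw [← Finset.prod_mul_distrib, ← Finset.prod_mul_distrib]
  refine Finset.prod_congr rfl fun j _ => ?_
  by_cases hadj : i < j ∧ G'.Adj i j
  · by_cases ha : i = a ∨ j = a
    · have hb : ¬ (i = b ∨ j = b) := by
        intro hb
        rcases ha with ha | ha <;> rcases hb with hb | hb
        · exact hne (ha.symm.trans hb)
        · exact hab (ha ▸ hb ▸ hadj.2)
        · exact hab (G'.adj_symm (ha ▸ hb ▸ hadj.2))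
        · exact hne (ha.symm.trans hb)
      have hG : ¬ (i < j ∧ G''.Adj i j) := by
        rintro ⟨_, h⟩
        rcases ha with rfl | rfl
        · exact ((hG'' _ _).1 h).2.1 rfl
        · exact ((hG'' _ _).1 h).2.2.2.1 rfl
      rw [if_pos hadj, if_pos ⟨hadj, ha⟩, if_neg (fun h => hb h.2), if_neg hG]
      ring
    · by_cases hb : i = b ∨ j = b
      · have hG : ¬ (i < j ∧ G''.Adj i j) := by
          rintro ⟨_, h⟩
          rcases hb with rfl | rfl
          · exact ((hG'' _ _).1 h).2.2.1 rfl
          · exact ((hG'' _ _).1 h).2.2.2.2 rfl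
        rw [if_pos hadj, if_neg (fun h => ha h.2), if_pos ⟨hadj, hb⟩, if_neg hG]
        ring
      · push_neg at ha hb
        have hG : G''.Adj i j := (hG'' _ _).2 ⟨hadj.2, ha.1, hb.1, ha.2, hb.2⟩
        rw [if_pos hadj, if_neg (fun h => h.2.elim ha.1 ha.2),
          if_neg (fun h => h.2.elim hb.1 hb.2), if_pos ⟨hadj.1, hG⟩]
        ring
  · have hG : ¬ (i < j ∧ G''.Adj i j) := fun h => hadj ⟨h.1, ((hG'' _ _).1 h.2).1⟩
    rw [if_neg hadj, if_neg (fun h => hadj h.1), if_neg (fun h => hadj h.1), if_neg hG]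
    ring

open Classical in
lemma triple_comm {α β γ : Type*} (s : Finset α) (t : Finset β) (u : Finset γ)
    (F : α → β → γ → ℝ) :
    ∑ x ∈ s, ∑ y ∈ t, ∑ z ∈ u, F x y z = ∑ z ∈ u, ∑ x ∈ s, ∑ y ∈ t, F x y z :=
  (Finset.sum_congr rfl fun x _ => Finset.sum_comm).trans Finset.sum_comm



open Classical in
/-- The density of compatible weighted homomorphisms of `H` into the weighted graph
given by the edge weights `f i j`, with vertex `i` landing in `Y i`. -/
noncomputable def den {V ι : Type*} [Fintype V] [Fintype ι] [LinearOrder ι]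
    (f : ι → ι → V → V → ℝ) (H : SimpleGraph ι) (Y : ι → Finset V) : ℝ :=
  (∑ z ∈ Fintype.piFinset Y, ∏ i : ι, ∏ j : ι,
      if i < j ∧ H.Adj i j then f i j (z i) (z j) else 1) /
    ∏ i : ι, ((Y i).card : ℝ)

/-- `(p, γ√(|A||B|))`-jumbledness of the pair `(A, B)` in the weighted graph `Γ`,
in functional form. -/
def Jumbled {V : Type*} (Γ : V → V → ℝ) (A B : Finset V) (p γ : ℝ) : Prop :=
  ∀ u v : V → ℝ, (∀ x, 0 ≤ u x ∧ u x ≤ 1) → (∀ y, 0 ≤ v y ∧ v y ≤ 1) →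
    |(∑ x ∈ A, ∑ y ∈ B, (Γ x y - p) * u x * v y) / ((A.card : ℝ) * (B.card : ℝ))|
      ≤ γ * Real.sqrt ((∑ x ∈ A, u x) / (A.card : ℝ)) *
          Real.sqrt ((∑ y ∈ B, v y) / (B.card : ℝ))

open Classical in
lemma den_edgeP {V : Type*} [Fintype V] {m : ℕ} (f : V → V → ℝ) (G : SimpleGraph (Fin m))
    (Y : Fin m → Finset V) :
    den (fun _ _ u v => f u v) G Y
      = (∑ z ∈ Fintype.piFinset Y, edgeP f G z) / ∏ i, ((Y i).card : ℝ) := by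
  unfold den edgeP
  congr
  try exact Subsingleton.elim _ _

theorem stmt_4 {V : Type*} [Fintype V] {m : ℕ} (H : SimpleGraph (Fin m))
    (a b : Fin m) (hab : H.Adj a b)
    (X : Fin m → Finset V) (hX : ∀ i, (X i).Nonempty)
    (Γ : V → V → ℝ) (hΓsymm : ∀ x y, Γ x y = Γ y x)
    (hΓ01 : ∀ x y, 0 ≤ Γ x y ∧ Γ x y ≤ 1)
    (p γ : ℝ) (hjumb : Jumbled Γ (X a) (X b) p γ)
    (f : V → V → ℝ) (hfsymm : ∀ x y, f x y = f y x)
    (hf01 : ∀ x y, 0 ≤ f x y ∧ f x y ≤ 1) :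
    |(∑ x ∈ X a, ∑ y ∈ X b, (Γ x y - p) *
          den (fun _ _ u v => f u v) (H.deleteEdges {s(a, b)})
            (Function.update (Function.update X a {x}) b {y})) /
        (((X a).card : ℝ) * ((X b).card : ℝ))|
      ≤ γ * Real.sqrt
          (den (fun _ _ u v => f u v) (H.deleteEdges {s(a, b)}) X *
            den (fun _ _ u v => f u v) (H.deleteEdges {e | a ∈ e ∨ b ∈ e}) X) := by
  classical
  have hne : a ≠ b := H.ne_of_adj hab
  set H' : SimpleGraph (Fin m) := H.deleteEdges {s(a, b)} with hH'def
  set H'' : SimpleGraph (Fin m) := H.deleteEdges {e | a ∈ e ∨ b ∈ e} with hH''def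
  have hf0 : ∀ x y, 0 ≤ f x y := fun x y => (hf01 x y).1
  have hH'ab : ¬ H'.Adj a b := by
    simp [hH'def, SimpleGraph.deleteEdges_adj]
  have hG'' : ∀ i j, H''.Adj i j ↔ H'.Adj i j ∧ i ≠ a ∧ i ≠ b ∧ j ≠ a ∧ j ≠ b := by
    intro i j
    simp only [hH'def, hH''def, SimpleGraph.deleteEdges_adj, Set.mem_setOf_eq,
      Set.mem_singleton_iff, Sym2.mem_iff, Sym2.eq_iff]
    constructor
    · rintro ⟨h, hn⟩
      push_neg at hn
      exact ⟨⟨h, by tauto⟩, by tauto⟩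
    · rintro ⟨⟨h, -⟩, h2⟩
      refine ⟨h, ?_⟩
      push_neg
      tauto
  have hH''a : ∀ j, ¬ H''.Adj a j := fun j h => ((hG'' a j).1 h).2.1 rfl
  have hH''b : ∀ j, ¬ H''.Adj b j := fun j h => ((hG'' b j).1 h).2.2.1 rfl
  have hcA : (0:ℝ) < ((X a).card : ℝ) := by exact_mod_cast (hX a).card_pos
  have hcB : (0:ℝ) < ((X b).card : ℝ) := by exact_mod_cast (hX b).card_pos
  set N : ℝ := ∏ i, ((X i).card : ℝ) with hNdef
  have hN : 0 < N := Finset.prod_pos fun i _ => by exact_mod_cast (hX i).card_pos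
  -- update invariance of the factored integrand
  have hFupd : ∀ (x y : V) (c : Fin m), (c = a ∨ c = b) → ∀ (z : Fin m → V) (s : V),
      starP f H' a x (Function.update z c s) * starP f H' b y (Function.update z c s)
        * edgeP f H'' (Function.update z c s)
      = starP f H' a x z * starP f H' b y z * edgeP f H'' z := by
    intro x y c hc z s
    have h1 : ¬ H'.Adj a c := by
      rcases hc with rfl | rfl
      · exact SimpleGraph.irrefl H'
      · exact hH'ab
    have h2 : ¬ H'.Adj b c := by
      rcases hc with rfl | rfl
      · exact fun h => hH'ab (H'.adj_symm h)
      · exact SimpleGraph.irrefl H'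
    have h3 : ∀ j, ¬ H''.Adj c j := by
      rcases hc with rfl | rfl
      · exact hH''a
      · exact hH''b
    rw [starP_update f H' a c h1 x z s, starP_update f H' b c h2 y z s,
      edgeP_update f H'' c h3 z s]
  -- notation for the factored integrand
  have hmarg : ∀ x y : V,
      (∑ z ∈ Fintype.piFinset X,
        starP f H' a x z * starP f H' b y z * edgeP f H'' z)
      = ((X a).card : ℝ) * ((X b).card : ℝ) *
        ∑ z ∈ Fintype.piFinset (Function.update (Function.update X a {x}) b {y}),
          starP f H' a x z * starP f H' b y z * edgeP f H'' z := by
    intro x y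
    rw [sum_piFinset_indep X a x _ (fun z s => hFupd x y a (Or.inl rfl) z s)]
    rw [sum_piFinset_indep (Function.update X a {x}) b y _
      (fun z s => hFupd x y b (Or.inr rfl) z s)]
    rw [Function.update_of_ne hne.symm]
    ring
  have hz_sum : ∀ x y : V,
      (∑ z ∈ Fintype.piFinset (Function.update (Function.update X a {x}) b {y}),
        edgeP f H' z)
      = ∑ z ∈ Fintype.piFinset (Function.update (Function.update X a {x}) b {y}),
          starP f H' a x z * starP f H' b y z * edgeP f H'' z := by
    intro x y
    refine Finset.sum_congr rfl fun z hz => ?_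
    have hza : z a = x := by
      have h := Fintype.mem_piFinset.1 hz a
      rw [Function.update_of_ne hne, Function.update_self] at h
      exact Finset.mem_singleton.1 h
    have hzb : z b = y := by
      have h := Fintype.mem_piFinset.1 hz b
      rw [Function.update_self] at h
      exact Finset.mem_singleton.1 h
    rw [edgeP_factor f hfsymm H' H'' a b hne hH'ab hG'' z, hza, hzb]
  have hprod : ∀ x y : V,
      (∏ i, ((Function.update (Function.update X a {x}) b {y} i).card : ℝ))
        * (((X a).card : ℝ) * ((X b).card : ℝ)) = N := by
    intro x y
    have hfun : ∀ i, ((Function.update (Function.update X a {x}) b {y} i).card : ℝ)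
        = Function.update (Function.update (fun i => ((X i).card : ℝ)) a 1) b 1 i := by
      intro i
      rcases eq_or_ne i b with rfl | hib
      · simp
      · rcases eq_or_ne i a with rfl | hia
        · simp [Function.update_of_ne hib, Function.update_of_ne hne]
        · simp [Function.update_of_ne hib, Function.update_of_ne hia]
    rw [Finset.prod_congr rfl fun i _ => hfun i]
    rw [Finset.prod_update_of_mem (Finset.mem_univ b)]
    rw [Finset.prod_update_of_mem (by simp [hne] : a ∈ Finset.univ \ {b})]
    rw [hNdef, ← Finset.mul_prod_erase Finset.univ _ (Finset.mem_univ b),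
      ← Finset.mul_prod_erase (Finset.univ.erase b) _
        (by simp [hne] : a ∈ Finset.univ.erase b)]
    rw [show (Finset.univ \ {b}) \ {a} = (Finset.univ.erase b).erase a by
      rw [Finset.sdiff_singleton_eq_erase, Finset.sdiff_singleton_eq_erase]]
    ring
  have hcAB : (0:ℝ) < ((X a).card : ℝ) * ((X b).card : ℝ) := mul_pos hcA hcB
  have key1 : ∀ x y : V,
      den (fun _ _ u v => f u v) H' (Function.update (Function.update X a {x}) b {y})
      = (∑ z ∈ Fintype.piFinset X,
          starP f H' a x z * starP f H' b y z * edgeP f H'' z) / N := by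
    intro x y
    have hQ : (∏ i, ((Function.update (Function.update X a {x}) b {y} i).card : ℝ))
        = N / (((X a).card : ℝ) * ((X b).card : ℝ)) :=
      (eq_div_iff hcAB.ne').2 (hprod x y)
    rw [den_edgeP, hz_sum x y, hmarg x y, hQ, div_div_eq_mul_div, mul_comm]
  have hsplit : (∑ z ∈ Fintype.piFinset X, edgeP f H' z)
      = ∑ x ∈ X a, ∑ y ∈ X b,
          ∑ z ∈ Fintype.piFinset (Function.update (Function.update X a {x}) b {y}),
            edgeP f H' z := by
    rw [sum_piFinset_split X a (edgeP f H')]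
    refine Finset.sum_congr rfl fun x hx => ?_
    rw [sum_piFinset_split (Function.update X a {x}) b (edgeP f H')]
    rw [Function.update_of_ne hne.symm]
  have hXsum : (∑ z ∈ Fintype.piFinset X, edgeP f H' z)
      = (∑ z ∈ Fintype.piFinset X,
          (∑ x ∈ X a, starP f H' a x z) * (∑ y ∈ X b, starP f H' b y z) * edgeP f H'' z)
        / (((X a).card : ℝ) * ((X b).card : ℝ)) := by
    rw [hsplit]
    have step : ∀ x y : V,
        (∑ z ∈ Fintype.piFinset (Function.update (Function.update X a {x}) b {y}),
          edgeP f H' z)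
        = (∑ z ∈ Fintype.piFinset X,
            starP f H' a x z * starP f H' b y z * edgeP f H'' z)
          / (((X a).card : ℝ) * ((X b).card : ℝ)) := by
      intro x y
      rw [hz_sum x y, hmarg x y, mul_div_cancel_left₀ _ hcAB.ne']
    rw [Finset.sum_congr rfl fun x _ => Finset.sum_congr rfl fun y _ => step x y]
    simp only [← Finset.sum_div]
    congr 1
    rw [triple_comm]
    refine Finset.sum_congr rfl fun z _ => ?_
    symm
    rw [Finset.sum_mul_sum, Finset.sum_mul]
    refine Finset.sum_congr rfl fun x _ => ?_
    rw [Finset.sum_mul]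
  have key2 : den (fun _ _ u v => f u v) H' X
      = (∑ z ∈ Fintype.piFinset X,
          (∑ x ∈ X a, starP f H' a x z) * (∑ y ∈ X b, starP f H' b y z) * edgeP f H'' z)
        / (((X a).card : ℝ) * ((X b).card : ℝ) * N) := by
    rw [den_edgeP, hXsum, ← hNdef, div_div]
  have key3 : den (fun _ _ u v => f u v) H'' X
      = (∑ z ∈ Fintype.piFinset X, edgeP f H'' z) / N := by
    rw [den_edgeP, ← hNdef]
  have hγ : 0 ≤ γ := by
    have h := hjumb (fun _ => 1) (fun _ => 1) (fun _ => ⟨zero_le_one, le_rfl⟩)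
      (fun _ => ⟨zero_le_one, le_rfl⟩)
    rw [Finset.sum_const, Finset.sum_const, nsmul_eq_mul, nsmul_eq_mul, mul_one, mul_one,
      div_self hcA.ne', div_self hcB.ne', Real.sqrt_one, mul_one, mul_one] at h
    exact le_trans (abs_nonneg _) h
  have hAbound : ∀ z : Fin m → V,
      |∑ x ∈ X a, ∑ y ∈ X b, (Γ x y - p) * starP f H' a x z * starP f H' b y z|
      ≤ (γ * Real.sqrt ((∑ x ∈ X a, starP f H' a x z) / ((X a).card : ℝ))
          * Real.sqrt ((∑ y ∈ X b, starP f H' b y z) / ((X b).card : ℝ)))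
        * (((X a).card : ℝ) * ((X b).card : ℝ)) := by
    intro z
    have h := hjumb (fun x => starP f H' a x z) (fun y => starP f H' b y z)
      (fun x => ⟨starP_nonneg f hf0 H' a x z, starP_le_one f hf01 H' a x z⟩)
      (fun y => ⟨starP_nonneg f hf0 H' b y z, starP_le_one f hf01 H' b y z⟩)
    try simp only [] at h
    rw [abs_div, abs_of_pos hcAB] at h
    exact (div_le_iff₀ hcAB).1 h
  have hWnn : ∀ z : Fin m → V, 0 ≤ edgeP f H'' z := fun z => edgeP_nonneg f hf0 H'' z
  have hSUnn : ∀ z : Fin m → V,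
      0 ≤ (∑ x ∈ X a, starP f H' a x z) / ((X a).card : ℝ) := fun z =>
    div_nonneg (Finset.sum_nonneg fun x _ => starP_nonneg f hf0 H' a x z) hcA.le
  have hSVnn : ∀ z : Fin m → V,
      0 ≤ (∑ y ∈ X b, starP f H' b y z) / ((X b).card : ℝ) := fun z =>
    div_nonneg (Finset.sum_nonneg fun y _ => starP_nonneg f hf0 H' b y z) hcB.le
  have hden' : 0 ≤ den (fun _ _ u v => f u v) H' X := by
    rw [den_edgeP, ← hNdef]
    exact div_nonneg (Finset.sum_nonneg fun z _ => edgeP_nonneg f hf0 H' z) hN.le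
  have hden'' : 0 ≤ den (fun _ _ u v => f u v) H'' X := by
    rw [den_edgeP, ← hNdef]
    exact div_nonneg (Finset.sum_nonneg fun z _ => edgeP_nonneg f hf0 H'' z) hN.le
  have exprEq : (∑ x ∈ X a, ∑ y ∈ X b, (Γ x y - p) *
        den (fun _ _ u v => f u v) H' (Function.update (Function.update X a {x}) b {y}))
      = (∑ z ∈ Fintype.piFinset X,
          (∑ x ∈ X a, ∑ y ∈ X b, (Γ x y - p) * starP f H' a x z * starP f H' b y z)
            * edgeP f H'' z) / N := by
    rw [Finset.sum_congr rfl fun x (_ : x ∈ X a) => Finset.sum_congr rfl fun y (_ : y ∈ X b) =>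
      (by rw [key1 x y] : (Γ x y - p) *
          den (fun _ _ u v => f u v) H' (Function.update (Function.update X a {x}) b {y})
        = (Γ x y - p) * ((∑ z ∈ Fintype.piFinset X,
            starP f H' a x z * starP f H' b y z * edgeP f H'' z) / N))]
    simp only [← mul_div_assoc, ← Finset.sum_div]
    congr 1
    simp only [Finset.mul_sum]
    rw [triple_comm]
    refine Finset.sum_congr rfl fun z _ => ?_
    symm
    rw [Finset.sum_mul]
    refine Finset.sum_congr rfl fun x _ => ?_
    rw [Finset.sum_mul]
    refine Finset.sum_congr rfl fun y _ => ?_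
    ring
  have hg1 : (∑ z ∈ Fintype.piFinset X,
        ((∑ x ∈ X a, starP f H' a x z) / ((X a).card : ℝ))
          * ((∑ y ∈ X b, starP f H' b y z) / ((X b).card : ℝ)) * edgeP f H'' z)
      = den (fun _ _ u v => f u v) H' X * N := by
    have e : ∀ z : Fin m → V,
        ((∑ x ∈ X a, starP f H' a x z) / ((X a).card : ℝ))
            * ((∑ y ∈ X b, starP f H' b y z) / ((X b).card : ℝ)) * edgeP f H'' z
        = ((∑ x ∈ X a, starP f H' a x z) * (∑ y ∈ X b, starP f H' b y z)) * edgeP f H'' z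
            / (((X a).card : ℝ) * ((X b).card : ℝ)) := fun z => by
      rw [div_mul_div_comm, div_mul_eq_mul_div]
    rw [Finset.sum_congr rfl fun z _ => e z, ← Finset.sum_div, den_edgeP, ← hNdef, hXsum,
      div_mul_cancel₀ _ hN.ne']
  have hg2 : (∑ z ∈ Fintype.piFinset X, edgeP f H'' z)
      = den (fun _ _ u v => f u v) H'' X * N := by
    rw [den_edgeP, ← hNdef, div_mul_cancel₀ _ hN.ne']
  have hsq : ∀ z : Fin m → V,
      Real.sqrt ((∑ x ∈ X a, starP f H' a x z) / ((X a).card : ℝ))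
        * Real.sqrt ((∑ y ∈ X b, starP f H' b y z) / ((X b).card : ℝ)) * edgeP f H'' z
      = Real.sqrt (((∑ x ∈ X a, starP f H' a x z) / ((X a).card : ℝ))
          * ((∑ y ∈ X b, starP f H' b y z) / ((X b).card : ℝ)) * edgeP f H'' z)
        * Real.sqrt (edgeP f H'' z) := by
    intro z
    conv_lhs => rw [← Real.mul_self_sqrt (hWnn z)]
    rw [Real.sqrt_mul (mul_nonneg (hSUnn z) (hSVnn z)), Real.sqrt_mul (hSUnn z)]
    ring
  have hnum : |∑ z ∈ Fintype.piFinset X,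
        (∑ x ∈ X a, ∑ y ∈ X b, (Γ x y - p) * starP f H' a x z * starP f H' b y z)
          * edgeP f H'' z|
      ≤ (γ * (((X a).card : ℝ) * ((X b).card : ℝ))) *
          (Real.sqrt (den (fun _ _ u v => f u v) H' X * N)
            * Real.sqrt (den (fun _ _ u v => f u v) H'' X * N)) := by
    calc |∑ z ∈ Fintype.piFinset X,
        (∑ x ∈ X a, ∑ y ∈ X b, (Γ x y - p) * starP f H' a x z * starP f H' b y z)
          * edgeP f H'' z|
        ≤ ∑ z ∈ Fintype.piFinset X,
            |(∑ x ∈ X a, ∑ y ∈ X b, (Γ x y - p) * starP f H' a x z * starP f H' b y z)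
              * edgeP f H'' z| := Finset.abs_sum_le_sum_abs _ _
      _ ≤ ∑ z ∈ Fintype.piFinset X,
            (γ * Real.sqrt ((∑ x ∈ X a, starP f H' a x z) / ((X a).card : ℝ))
              * Real.sqrt ((∑ y ∈ X b, starP f H' b y z) / ((X b).card : ℝ))
              * (((X a).card : ℝ) * ((X b).card : ℝ))) * edgeP f H'' z := by
          refine Finset.sum_le_sum fun z _ => ?_
          rw [abs_mul, abs_of_nonneg (hWnn z)]
          exact mul_le_mul_of_nonneg_right (hAbound z) (hWnn z)
      _ = (γ * (((X a).card : ℝ) * ((X b).card : ℝ))) *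
            ∑ z ∈ Fintype.piFinset X,
              Real.sqrt ((∑ x ∈ X a, starP f H' a x z) / ((X a).card : ℝ))
                * Real.sqrt ((∑ y ∈ X b, starP f H' b y z) / ((X b).card : ℝ))
                * edgeP f H'' z := by
          rw [Finset.mul_sum]
          exact Finset.sum_congr rfl fun z _ => by ring
      _ ≤ (γ * (((X a).card : ℝ) * ((X b).card : ℝ))) *
            (Real.sqrt (∑ z ∈ Fintype.piFinset X,
                ((∑ x ∈ X a, starP f H' a x z) / ((X a).card : ℝ))
                  * ((∑ y ∈ X b, starP f H' b y z) / ((X b).card : ℝ)) * edgeP f H'' z)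
              * Real.sqrt (∑ z ∈ Fintype.piFinset X, edgeP f H'' z)) := by
          refine mul_le_mul_of_nonneg_left ?_ (mul_nonneg hγ hcAB.le)
          refine le_trans (le_of_eq (Finset.sum_congr rfl fun z _ => hsq z)) ?_
          exact Real.sum_sqrt_mul_sqrt_le (Fintype.piFinset X)
            (f := fun z => ((∑ x ∈ X a, starP f H' a x z) / ((X a).card : ℝ))
              * ((∑ y ∈ X b, starP f H' b y z) / ((X b).card : ℝ)) * edgeP f H'' z)
            (g := fun z => edgeP f H'' z)
            (fun z => mul_nonneg (mul_nonneg (hSUnn z) (hSVnn z)) (hWnn z)) hWnn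
      _ = (γ * (((X a).card : ℝ) * ((X b).card : ℝ))) *
            (Real.sqrt (den (fun _ _ u v => f u v) H' X * N)
              * Real.sqrt (den (fun _ _ u v => f u v) H'' X * N)) := by
          rw [hg1, hg2]
  rw [exprEq, div_div, abs_div, abs_of_pos (mul_pos hN hcAB)]
  have e1 : Real.sqrt (den (fun _ _ u v => f u v) H' X * N)
      * Real.sqrt (den (fun _ _ u v => f u v) H'' X * N)
      = Real.sqrt (den (fun _ _ u v => f u v) H' X * den (fun _ _ u v => f u v) H'' X)
        * N := by
    conv_lhs => rw [Real.sqrt_mul hden', Real.sqrt_mul hden'']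
    conv_rhs => rw [Real.sqrt_mul hden', ← Real.mul_self_sqrt hN.le]
    ring
  calc _ ≤ ((γ * (((X a).card : ℝ) * ((X b).card : ℝ))) *
        (Real.sqrt (den (fun _ _ u v => f u v) H' X * N)
          * Real.sqrt (den (fun _ _ u v => f u v) H'' X * N))) /
        (N * (((X a).card : ℝ) * ((X b).card : ℝ))) := by
        exact (div_le_div_iff_of_pos_right (mul_pos hN hcAB)).2 hnum
    _ = γ * Real.sqrt (den (fun _ _ u v => f u v) H' X * den (fun _ _ u v => f u v) H'' X) := by
        rw [e1]
        rw [show (γ * (((X a).card : ℝ) * ((X b).card : ℝ))) *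
            (Real.sqrt (den (fun _ _ u v => f u v) H' X * den (fun _ _ u v => f u v) H'' X) * N)
          = (γ * Real.sqrt (den (fun _ _ u v => f u v) H' X
              * den (fun _ _ u v => f u v) H'' X)) *
            (N * (((X a).card : ℝ) * ((X b).card : ℝ))) from by ring]
        exact mul_div_cancel_right₀ _ (mul_pos hN hcAB).ne'
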